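/- Let k ≥ 2 and let α_1, ..., α_k ∈ ℂ be the distinct roots of Ψ_k(X) = X^k − X^{k−1} − ⋯ − X − 1, with α_1 the unique root of absolute value greater than 1. If m_1, m_2, ..., m_k are integers with m_1 < 0 and m_i > 0 for i = 2, ..., k, then there is no nonzero integer n with (α_1^{m_1} α_2^{m_2} ⋯ α_k^{m_k})^n = 1; in other words, α_1^{m_1} α_2^{m_2} ⋯ α_k^{m_k} is not a root of unity. -/

import Mathlib

/-- **No monomial in the roots with negative exponent on `α₁` and positive on the
others is a root of unity.** Let `α_1, …, α_k` be the distinct complex roots of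
`Ψ_k(X) = X^k - X^{k-1} - ⋯ - X - 1`, with `α_1` the unique root of absolute value
greater than `1`. If `m_1 < 0` and `m_i > 0` for `i = 2, …, k`, then
`α_1^{m_1} α_2^{m_2} ⋯ α_k^{m_k}` is not a root of unity: no nonzero integer power
of it equals `1`. -/
theorem monomial_in_roots_not_root_of_unity (k : ℕ) (hk : 2 ≤ k) (α : Fin k → ℂ)
    (hdist : Function.Injective α)
    (hroot : ∀ i, (α i) ^ k = ∑ j ∈ Finset.range k, (α i) ^ j)
    (hbig : 1 < ‖α ⟨0, by omega⟩‖)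
    (huniq : ∀ i : Fin k, 1 < ‖α i‖ → i = ⟨0, by omega⟩)
    (m : Fin k → ℤ) (hm0 : m ⟨0, by omega⟩ < 0)
    (hmpos : ∀ i : Fin k, i ≠ ⟨0, by omega⟩ → 0 < m i) :
    ∀ n : ℤ, n ≠ 0 → (∏ i, (α i) ^ (m i)) ^ n ≠ 1 := by
  intro n hn heq
  set i0 : Fin k := ⟨0, by omega⟩ with hi0
  -- roots are nonzero
  have hne : ∀ i, α i ≠ 0 := by
    intro i h
    have h1 := hroot i
    rw [h] at h1
    rw [zero_pow (by omega), Finset.sum_eq_single 0 (by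
      intro b _ hb; exact zero_pow hb) (by
      intro h'; exact absurd (Finset.mem_range.mpr (by omega)) h')] at h1
    simp at h1
  set r : Fin k → ℝ := fun i => ‖α i‖ with hr
  have hrpos : ∀ i, 0 < r i := fun i => by
    simpa [hr] using (norm_pos_iff.mpr (hne i))
  have hrle : ∀ i, i ≠ i0 → r i ≤ 1 := by
    intro i hi
    by_contra h
    exact hi (huniq i (lt_of_not_ge h))
  -- |β| < 1
  have habs : ‖∏ i, (α i) ^ (m i)‖ = ∏ i, r i ^ (m i) := by
    rw [norm_prod]
    simp [hr, norm_zpow]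
  have hlt : ∏ i, r i ^ (m i) < 1 := by
    have h0 : r i0 ^ (m i0) < 1 := by
      exact zpow_lt_one_of_neg₀ hbig hm0
    have hrest : ∏ i ∈ Finset.univ.erase i0, r i ^ (m i) ≤ 1 := by
      apply Finset.prod_le_one
      · intro i _
        positivity
      · intro i hi
        have hi' : i ≠ i0 := (Finset.mem_erase.mp hi).1
        exact zpow_le_one₀ (hrpos i) (hrle i hi') (le_of_lt (hmpos i hi'))
    have := Finset.mul_prod_erase Finset.univ (fun i => r i ^ (m i)) (Finset.mem_univ i0)
    rw [← this]
    calc r i0 ^ (m i0) * ∏ i ∈ Finset.univ.erase i0, r i ^ (m i)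
        ≤ r i0 ^ (m i0) * 1 := by
          apply mul_le_mul_of_nonneg_left hrest (le_of_lt (zpow_pos (hrpos i0) _))
      _ = r i0 ^ (m i0) := mul_one _
      _ < 1 := h0
  set b : ℝ := ∏ i, r i ^ (m i) with hb
  have hbpos : 0 < b := by
    apply Finset.prod_pos; intro i _; exact zpow_pos (hrpos i) _
  have habs1 : b ^ n = 1 := by
    have := congrArg norm heq
    rwa [norm_zpow, habs, norm_one] at this
  rcases lt_or_gt_of_ne hn with hneg | hpos
  · have : 1 < b ^ n := one_lt_zpow_of_neg₀ hbpos hlt hneg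
    rw [habs1] at this; exact lt_irrefl _ this
  · have : b ^ n < 1 := zpow_lt_one₀ hbpos hlt hpos
    rw [habs1] at this; exact lt_irrefl _ this
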